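/- Let Γ, ω, γ₊, γ₋ : [0,∞) → ℝ be continuous functions such that, as t → +∞, Γ(t) → Γ⁰ with Γ⁰ > 0, γ₊(t) → γ₊⁰ with γ₊⁰ > 0, and γ₋(t) → γ₋⁰. Let x, y, z : [0,∞) → ℝ be differentiable functions satisfying ẋ(t) = −Γ(t)x(t) + ω(t)y(t), ẏ(t) = −ω(t)x(t) − Γ(t)y(t), ż(t) = −γ₊(t)z(t) + γ₋(t) and x(t)² + y(t)² + z(t)² ≤ 1 for all t ≥ 0. Then, as t → +∞, x(t) → 0, y(t) → 0, and z(t) → γ₋⁰/γ₊⁰ (the coherence vector converges to the equilibrium state (0, 0, γ₋⁰/γ₊⁰)). -/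

import Mathlib

open Filter


lemma expDecayBound (u u' : ℝ → ℝ) (T k δ : ℝ) (hk : 0 < k)
    (hd : ∀ t ≥ T, HasDerivAt u (u' t) t)
    (hle : ∀ t ≥ T, u' t ≤ -k * u t + δ) :
    ∀ t ≥ T, u t ≤ (u T - δ / k) * Real.exp (-(k * (t - T))) + δ / k := by
  intro t ht
  set g : ℝ → ℝ := fun s => (u s - δ / k) * Real.exp (k * (s - T)) with hg
  have hgd : ∀ s ∈ Set.Ici T,
      HasDerivAt g ((u' s + k * u s - δ) * Real.exp (k * (s - T))) s := by
    intro s hs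
    have h1 : HasDerivAt (fun s => u s - δ / k) (u' s) s := (hd s hs).sub_const _
    have h2 : HasDerivAt (fun s => Real.exp (k * (s - T))) (k * Real.exp (k * (s - T))) s := by
      have h3 : HasDerivAt (fun s : ℝ => k * (s - T)) k s := by
        simpa using ((hasDerivAt_id s).sub_const T).const_mul k
      convert h3.exp using 1; ring
    have := h1.mul h2
    refine this.congr_deriv ?_
    have hkne : k ≠ 0 := ne_of_gt hk
    linear_combination (-Real.exp (k * (s - T))) * (div_mul_cancel₀ δ hkne)
  have hanti : AntitoneOn g (Set.Ici T) := by
    apply antitoneOn_of_deriv_nonpos (convex_Ici T)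
    · exact fun s hs => (hgd s hs).continuousAt.continuousWithinAt
    · exact fun s hs => (hgd s (interior_subset hs)).differentiableAt.differentiableWithinAt
    · intro s hs
      rw [interior_Ici] at hs
      rw [(hgd s (Set.mem_Ici.mpr (le_of_lt (Set.mem_Ioi.mp hs)))).deriv]
      have h1 : u' s + k * u s - δ ≤ 0 := by
        have := hle s (le_of_lt hs); linarith
      exact mul_nonpos_of_nonpos_of_nonneg h1 (Real.exp_pos _).le
  have h1 : (u t - δ / k) * Real.exp (k * (t - T)) ≤ u T - δ / k := by
    have := hanti Set.self_mem_Ici ht ht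
    simpa [g, Real.exp_zero] using this
  have h2 := mul_le_mul_of_nonneg_right h1 (Real.exp_pos (-(k * (t - T)))).le
  rw [mul_assoc, ← Real.exp_add] at h2
  simp only [add_neg_cancel, Real.exp_zero, mul_one] at h2
  linarith

lemma tendsto_zero_of_decay (u u' : ℝ → ℝ) (k B : ℝ) (hk : 0 < k)
    (hd : ∀ t ≥ (0:ℝ), HasDerivAt u (u' t) t)
    (hnn : ∀ t ≥ (0:ℝ), 0 ≤ u t)
    (hB : ∀ t ≥ (0:ℝ), u t ≤ B)
    (hsmall : ∀ δ > (0:ℝ), ∀ᶠ t in atTop, u' t ≤ -k * u t + δ) :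
    Tendsto u atTop (nhds 0) := by
  have hBnn : 0 ≤ B := le_trans (hnn 0 le_rfl) (hB 0 le_rfl)
  rw [Metric.tendsto_atTop]
  intro ε hε
  have hδ : (0:ℝ) < k * ε / 4 := by positivity
  obtain ⟨T0, hT0⟩ := eventually_atTop.mp (hsmall _ hδ)
  set T := max T0 0 with hT
  have hT0' : (0:ℝ) ≤ T := le_max_right _ _
  have hbound := expDecayBound u u' T k (k * ε / 4) hk
    (fun t ht => hd t (le_trans hT0' ht))
    (fun t ht => hT0 t (le_trans (le_max_left _ _) ht))
  have hdk : k * ε / 4 / k = ε / 4 := by field_simp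
  -- exponential term tends to 0
  have hexp : Tendsto (fun t => B * Real.exp (-(k * (t - T)))) atTop (nhds 0) := by
    have h0 : Tendsto (fun t : ℝ => k * (t - T)) atTop atTop := by
      apply Tendsto.const_mul_atTop hk
      simpa [sub_eq_add_neg] using tendsto_atTop_add_const_right atTop (-T) tendsto_id
    have h1 : Tendsto (fun t : ℝ => -(k * (t - T))) atTop atBot :=
      tendsto_neg_atBot_iff.mpr h0
    have h2 := Real.tendsto_exp_atBot.comp h1
    simpa using h2.const_mul B
  have hev : ∀ᶠ t in atTop, B * Real.exp (-(k * (t - T))) < ε / 2 := by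
    have : (0:ℝ) < ε / 2 := by linarith
    exact hexp.eventually (eventually_lt_nhds this)
  obtain ⟨T1, hT1⟩ := eventually_atTop.mp hev
  refine ⟨max T T1, fun t ht => ?_⟩
  have htT : t ≥ T := le_trans (le_max_left _ _) ht
  have htT1 : t ≥ T1 := le_trans (le_max_right _ _) ht
  have h1 := hbound t htT
  rw [hdk] at h1
  have h2 : (u T - ε / 4) * Real.exp (-(k * (t - T))) ≤ B * Real.exp (-(k * (t - T))) := by
    apply mul_le_mul_of_nonneg_right _ (Real.exp_pos _).le
    have := hB T hT0'
    linarith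
  have h3 := hT1 t htT1
  have h4 : 0 ≤ u t := hnn t (le_trans hT0' htT)
  rw [Real.dist_eq, sub_zero, abs_of_nonneg h4]
  linarith

/-- If the decay rates converge with positive limits `Γ⁰ > 0` and `γ₊⁰ > 0`, the
coherence vector of a two-level open quantum system converges to the equilibrium
state `(0, 0, γ₋⁰/γ₊⁰)`. -/
theorem coherence_vector_tendsto_equilibrium
    (Γ ω γp γm : ℝ → ℝ)
    (hΓc : ContinuousOn Γ (Set.Ici 0)) (hωc : ContinuousOn ω (Set.Ici 0))
    (hγpc : ContinuousOn γp (Set.Ici 0)) (hγmc : ContinuousOn γm (Set.Ici 0))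
    (Γ0 γp0 γm0 : ℝ) (hΓ0 : 0 < Γ0) (hγp0 : 0 < γp0)
    (hΓlim : Tendsto Γ atTop (nhds Γ0))
    (hγplim : Tendsto γp atTop (nhds γp0))
    (hγmlim : Tendsto γm atTop (nhds γm0))
    (x y z : ℝ → ℝ)
    (hx : ∀ t ≥ (0 : ℝ), HasDerivAt x (-Γ t * x t + ω t * y t) t)
    (hy : ∀ t ≥ (0 : ℝ), HasDerivAt y (-ω t * x t - Γ t * y t) t)
    (hz : ∀ t ≥ (0 : ℝ), HasDerivAt z (-γp t * z t + γm t) t)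
    (hball : ∀ t ≥ (0 : ℝ), x t ^ 2 + y t ^ 2 + z t ^ 2 ≤ 1) :
    Tendsto x atTop (nhds 0) ∧ Tendsto y atTop (nhds 0) ∧
      Tendsto z atTop (nhds (γm0 / γp0)) := by
  -- Part 1: r = x² + y² tends to 0
  set r : ℝ → ℝ := fun t => x t ^ 2 + y t ^ 2 with hr
  set r' : ℝ → ℝ := fun t =>
    2 * x t * (-Γ t * x t + ω t * y t) + 2 * y t * (-ω t * x t - Γ t * y t) with hr'
  have hrd : ∀ t ≥ (0:ℝ), HasDerivAt r (r' t) t := by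
    intro t ht
    have := ((hx t ht).pow 2).add ((hy t ht).pow 2)
    refine this.congr_deriv ?_
    push_cast
    ring
  have hrlim : Tendsto r atTop (nhds 0) := by
    apply tendsto_zero_of_decay r r' Γ0 1 hΓ0 hrd
      (fun t ht => by positivity)
      (fun t ht => by
        have := hball t ht; simp only [hr]; nlinarith [sq_nonneg (z t)])
    intro δ hδ
    have hΓev : ∀ᶠ t in atTop, Γ0 / 2 < Γ t :=
      hΓlim.eventually (eventually_gt_nhds (by linarith))
    filter_upwards [hΓev] with t hΓt
    have h1 : r' t = -(2 * Γ t) * r t := by simp only [hr, hr']; ring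
    rw [h1]
    simp only [hr]
    nlinarith [sq_nonneg (x t), sq_nonneg (y t)]
  have hsqrt : Tendsto (fun t => Real.sqrt (r t)) atTop (nhds 0) := by
    simpa using hrlim.sqrt
  have hxlim : Tendsto x atTop (nhds 0) := by
    apply squeeze_zero_norm _ hsqrt
    intro t
    rw [Real.norm_eq_abs, ← Real.sqrt_sq_eq_abs]
    exact Real.sqrt_le_sqrt (by simp only [hr]; nlinarith [sq_nonneg (y t)])
  have hylim : Tendsto y atTop (nhds 0) := by
    apply squeeze_zero_norm _ hsqrt
    intro t
    rw [Real.norm_eq_abs, ← Real.sqrt_sq_eq_abs]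
    exact Real.sqrt_le_sqrt (by simp only [hr]; nlinarith [sq_nonneg (x t)])
  -- Part 2: z tends to L = γm0 / γp0
  set L : ℝ := γm0 / γp0 with hL
  set w : ℝ → ℝ := fun t => z t - L with hw
  set u : ℝ → ℝ := fun t => w t ^ 2 with hu
  set u' : ℝ → ℝ := fun t => 2 * w t * (-γp t * z t + γm t) with hu'
  have hwd : ∀ t ≥ (0:ℝ), HasDerivAt u (u' t) t := by
    intro t ht
    have := ((hz t ht).sub_const L).pow 2
    refine this.congr_deriv ?_
    push_cast
    simp only [hu', hw]
    ring
  have hzabs : ∀ t ≥ (0:ℝ), |z t| ≤ 1 := by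
    intro t ht
    have h1 := hball t ht
    rw [abs_le]
    constructor <;> nlinarith [sq_nonneg (x t), sq_nonneg (y t), sq_nonneg (z t + 1), sq_nonneg (z t - 1)]
  have hwabs : ∀ t ≥ (0:ℝ), |w t| ≤ 1 + |L| := by
    intro t ht
    have h1 : |z t - L| ≤ |z t| + |L| := by
      simpa [sub_eq_add_neg, abs_neg] using abs_add_le (z t) (-L)
    have := hzabs t ht
    simp only [hw]
    linarith
  have hulim : Tendsto u atTop (nhds 0) := by
    apply tendsto_zero_of_decay u u' γp0 ((1 + |L|) ^ 2) hγp0 hwd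
      (fun t ht => by positivity)
      (fun t ht => by
        have h1 := hwabs t ht
        have h2 : |w t| ^ 2 ≤ (1 + |L|) ^ 2 :=
          pow_le_pow_left₀ (abs_nonneg _) h1 2
        simpa [hu, sq_abs] using h2)
    intro δ hδ
    set δ' : ℝ := δ / (2 * (1 + |L|)) with hδ'
    have hδ'pos : 0 < δ' := by positivity
    have hetend : Tendsto (fun t => γm t - γp t * L) atTop (nhds 0) := by
      have := hγmlim.sub (hγplim.mul_const L)
      have hL0 : γm0 - γp0 * L = 0 := by
        rw [hL]; field_simp; ring
      rwa [hL0] at this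
    have heev : ∀ᶠ t in atTop, |γm t - γp t * L| < δ' := by
      have := hetend (Metric.ball_mem_nhds 0 hδ'pos)
      simpa [Metric.mem_ball, Real.dist_eq] using this
    have hγev : ∀ᶠ t in atTop, γp0 / 2 < γp t :=
      hγplim.eventually (eventually_gt_nhds (by linarith))
    filter_upwards [heev, hγev, eventually_ge_atTop (0:ℝ)] with t he hγt ht0
    have hweq : -γp t * z t + γm t = -γp t * w t + (γm t - γp t * L) := by
      simp only [hw]; ring
    have hwa := hwabs t ht0
    have h1 : w t * (γm t - γp t * L) ≤ |w t| * |γm t - γp t * L| := by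
      calc w t * (γm t - γp t * L) ≤ |w t * (γm t - γp t * L)| := le_abs_self _
        _ = |w t| * |γm t - γp t * L| := abs_mul _ _
    have h2 : |w t| * |γm t - γp t * L| ≤ (1 + |L|) * δ' :=
      mul_le_mul hwa he.le (abs_nonneg _) (by positivity)
    have h3 : 2 * (1 + |L|) * δ' = δ := by
      rw [hδ']; field_simp
    have h4 : 0 ≤ (2 * γp t - γp0) * w t ^ 2 :=
      mul_nonneg (by linarith) (sq_nonneg _)
    simp only [hu', hu, hweq]
    nlinarith
  have hwlim : Tendsto w atTop (nhds 0) := by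
    apply squeeze_zero_norm _ (by simpa using hulim.sqrt : Tendsto (fun t => Real.sqrt (u t)) atTop (nhds 0))
    intro t
    rw [Real.norm_eq_abs, ← Real.sqrt_sq_eq_abs]
  have hzlim : Tendsto z atTop (nhds L) := by
    have := hwlim.add_const L
    simpa [hw] using this
  exact ⟨hxlim, hylim, hzlim⟩
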